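/- (Proposition 1: equivalence of the tailored loss and the Augmented Suboptimality Loss.) Let p be a positive integer, let X be a finite nonempty set of vectors in ℝ^p all of whose components belong to {0, 1}, let θ ∈ ℝ^p, let h : ℝ^p → ℝ, and let x̂ ∈ ℝ^p have all components in {0, 1}. Then the Augmented Suboptimality Loss with affine hypothesis and ℓ1-distance, ⟨θ, x̂⟩ + h(x̂) - min_{x ∈ X} (⟨θ, x⟩ + h(x) - ‖x̂ - x‖₁), is equal to the tailored loss ℓ_θ(x̂) = ⟨θ, x̂⟩ + h(x̂) - min_{x ∈ X} (⟨θ + 2x̂ - 𝟙, x⟩ + h(x) - ⟨𝟙, x̂⟩). -/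

import Mathlib

/-- Proposition 1: the Augmented Suboptimality Loss with affine hypothesis and
ℓ1-distance equals the tailored loss of the paper. -/
theorem ASL_eq_tailored_loss (p : ℕ) (hp : 0 < p)
    (X : Finset (Fin p → ℝ)) (hX : X.Nonempty)
    (hXbin : ∀ x ∈ X, ∀ i, x i = 0 ∨ x i = 1)
    (θ : Fin p → ℝ) (h : (Fin p → ℝ) → ℝ)
    (xh : Fin p → ℝ) (hxh : ∀ i, xh i = 0 ∨ xh i = 1) :
    (∑ i, θ i * xh i) + h xh
      - X.inf' hX (fun x => (∑ i, θ i * x i) + h x - ∑ i, |xh i - x i|)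
    = (∑ i, θ i * xh i) + h xh
      - X.inf' hX (fun x =>
          (∑ i, (θ i + 2 * xh i - 1) * x i) + h x - ∑ i, 1 * xh i) := by
  congr 1
  apply Finset.inf'_congr _ rfl
  intro x hx
  have key : ∀ i, |xh i - x i| = xh i + x i - 2 * xh i * x i := by
    intro i
    rcases hxh i with h1 | h1 <;> rcases hXbin x hx i with h2 | h2 <;>
      rw [h1, h2] <;> norm_num
  simp only [key]
  rw [Finset.sum_sub_distrib, Finset.sum_add_distrib]
  ring_nf
  rw [Finset.sum_congr rfl (fun i _ => by ring :
    ∀ i ∈ Finset.univ, (θ i * x i + xh i * x i * 2 - x i) = θ i * x i + 2 * xh i * x i - x i)]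
  rw [Finset.sum_sub_distrib, Finset.sum_add_distrib]
  ring_nf
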